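/- With the setup of the L* array for right-to-left lexicographically sorted strings of length K: for positions i ≤ j, the strings r_{i'}, ..., r_{j'} with i' the largest index ≤ i such that L*[i'-1] < k (or i' = 1) and j' the smallest index ≥ j such that L*[j'] < k (or j' = m), are exactly the strings of R whose length-k suffix equals the length-k suffix of r_i (equivalently, of r_j), provided r_i and r_j share a common suffix of length at least k. -/

import Mathlib

/-- Right-to-left lexicographic (strict) order on strings. -/
def rtlLt {α : Type*} [LT α] (a b : List α) : Prop :=
  ∃ (ta tb s : List α) (c d : α), a = ta ++ c :: s ∧ b = tb ++ d :: s ∧ c < d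

/-- The length of the longest common suffix of two strings. -/
noncomputable def lcsLen {α : Type*} (a b : List α) : ℕ :=
  sSup {k | k ≤ a.length ∧ k ≤ b.length ∧ a.drop (a.length - k) = b.drop (b.length - k)}

section aux

variable {α : Type*} [LinearOrder α]

lemma my_lex_append_left (s : List α) {x y : List α} (h : List.Lex (· < ·) x y) :
    List.Lex (· < ·) (s ++ x) (s ++ y) := by
  induction s with
  | nil => exact h
  | cons a s ih => exact List.Lex.cons ih

lemma my_rtlLt_lex {a b : List α} (h : rtlLt a b) :
    List.Lex (· < ·) a.reverse b.reverse := by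
  obtain ⟨ta, tb, s, c, d, ha, hb, hcd⟩ := h
  subst ha hb
  have h1 : (ta ++ c :: s).reverse = s.reverse ++ (c :: ta.reverse) := by
    simp
  have h2 : (tb ++ d :: s).reverse = s.reverse ++ (d :: tb.reverse) := by
    simp
  rw [h1, h2]
  exact my_lex_append_left _ (List.Lex.rel hcd)

lemma my_between : ∀ (k : ℕ) (x y z : List α),
    (List.Lex (· < ·) x y ∨ x = y) → (List.Lex (· < ·) y z ∨ y = z) →
    x.take k = z.take k → y.take k = x.take k := by
  intro k
  induction k with
  | zero => simp
  | succ k ih =>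
    intro x y z hxy hyz hxz
    rcases hxy with hxy | rfl
    · rcases hyz with hyz | rfl
      · -- both strict
        cases x with
        | nil =>
          -- z.take (k+1) = [] so z = [], contradicting Lex y z
          simp only [List.take_nil] at hxz
          have hz : z = [] := by
            cases z with
            | nil => rfl
            | cons c z' => simp at hxz
          subst hz
          exact absurd hyz List.not_lex_nil
        | cons a x' =>
          cases y with
          | nil => exact absurd hxy List.not_lex_nil
          | cons b y' =>
            cases z with
            | nil => exact absurd hyz List.not_lex_nil
            | cons c z' =>
              simp only [List.take_succ_cons, List.cons.injEq] at hxz ⊢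
              obtain ⟨hac, htail⟩ := hxz
              subst hac
              cases hxy with
              | rel h1 =>
                cases hyz with
                | rel h2 => exact absurd (h1.trans h2) (lt_irrefl a)
                | cons h2 => exact absurd h1 (lt_irrefl a)
              | cons h1 =>
                cases hyz with
                | rel h2 => exact absurd h2 (lt_irrefl a)
                | cons h2 =>
                  exact ⟨rfl, ih x' y' z' (Or.inl h1) (Or.inl h2) htail⟩
      · exact hxz.symm
    · rfl

lemma my_drop_sub (a : List α) {k n : ℕ} (hk : k ≤ n) (hn : n ≤ a.length) :
    a.drop (a.length - k) = (a.drop (a.length - n)).drop (n - k) := by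
  rw [List.drop_drop]
  congr 1
  omega

lemma my_lcsLen_ge_iff {a b : List α} {k : ℕ} (ha : k ≤ a.length) (hb : k ≤ b.length) :
    k ≤ lcsLen a b ↔ a.drop (a.length - k) = b.drop (b.length - k) := by
  set S := {n | n ≤ a.length ∧ n ≤ b.length ∧
    a.drop (a.length - n) = b.drop (b.length - n)} with hS
  have hbdd : BddAbove S := ⟨a.length, fun n hn => hn.1⟩
  have hne : S.Nonempty := ⟨0, by simp [hS]⟩
  constructor
  · intro h
    obtain ⟨h1, h2, h3⟩ := Nat.sSup_mem hne hbdd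
    have hk1 : k ≤ sSup S := h
    rw [my_drop_sub a hk1 h1, my_drop_sub b hk1 h2, h3]
  · intro h
    exact le_csSup hbdd ⟨ha, hb, h⟩

end aux

/-- Let `R = r_1, …, r_m` (1-indexed: `r_t = R.getD (t-1) []`) be length-`K` strings sorted
in right-to-left lexicographic order, with `L*[b] = lcsLen r_b r_{b+1}`.  Suppose `r_i` and
`r_j` (`i ≤ j`) share a common suffix of length at least `k`.  Let `i'` be the largest index
`≤ i` with `L*[i'-1] < k` (or `i' = 1`), and `j'` the smallest index `≥ j` with `L*[j'] < k`
(or `j' = m`).  Then `r_{i'}, …, r_{j'}` are exactly the strings of `R` whose length-`k`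
suffix equals the length-`k` suffix of `r_i`. -/
theorem stmt8 {α : Type*} [LinearOrder α] (K k : ℕ) (hk : k ≤ K)
    (R : List (List α))
    (hlen : ∀ r ∈ R, r.length = K)
    (hsort : R.Pairwise (fun a b => rtlLt a b ∨ a = b))
    (i j i' j' : ℕ)
    (h1i : 1 ≤ i) (hij : i ≤ j) (hjm : j ≤ R.length)
    (hcommon : k ≤ lcsLen (R.getD (i - 1) []) (R.getD (j - 1) []))
    (hi'1 : 1 ≤ i') (hi'le : i' ≤ i)
    (hi'prop : i' = 1 ∨ lcsLen (R.getD (i' - 2) []) (R.getD (i' - 1) []) < k)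
    (hi'max : ∀ b, i' ≤ b → b < i → k ≤ lcsLen (R.getD (b - 1) []) (R.getD b []))
    (hj'ge : j ≤ j') (hj'le : j' ≤ R.length)
    (hj'prop : j' = R.length ∨ lcsLen (R.getD (j' - 1) []) (R.getD j' []) < k)
    (hj'min : ∀ b, j ≤ b → b < j' → k ≤ lcsLen (R.getD (b - 1) []) (R.getD b [])) :
    ∀ t, 1 ≤ t → t ≤ R.length →
      ((i' ≤ t ∧ t ≤ j') ↔
        (R.getD (t - 1) []).drop (K - k) = (R.getD (i - 1) []).drop (K - k)) := by
  set m := R.length with hm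
  set g : ℕ → List α := fun t => R.getD (t - 1) [] with hg
  have hglen : ∀ t, 1 ≤ t → t ≤ m → (g t).length = K := by
    intro t h1 h2
    have hlt : t - 1 < R.length := by omega
    have : g t = R[t-1] := List.getD_eq_getElem R [] hlt
    rw [this]
    exact hlen _ (List.getElem_mem hlt)
  -- sorted relation between entries
  have hrel : ∀ p q, 1 ≤ p → p ≤ q → q ≤ m →
      (List.Lex (· < ·) (g p).reverse (g q).reverse ∨ (g p).reverse = (g q).reverse) := by
    intro p q h1 h2 h3
    rcases eq_or_lt_of_le h2 with rfl | hlt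
    · exact Or.inr rfl
    · have hp : p - 1 < R.length := by omega
      have hq : q - 1 < R.length := by omega
      have hgp : g p = R.get ⟨p - 1, hp⟩ := List.getD_eq_getElem R [] hp
      have hgq : g q = R.get ⟨q - 1, hq⟩ := List.getD_eq_getElem R [] hq
      have := hsort.rel_get_of_lt (a := ⟨p - 1, hp⟩) (b := ⟨q - 1, hq⟩) (by
        simp only [Fin.mk_lt_mk]; omega)
      rw [hgp, hgq]
      rcases this with h | h
      · exact Or.inl (my_rtlLt_lex h)
      · exact Or.inr (by rw [h])
  -- length-k suffix
  set sfx : ℕ → List α := fun t => (g t).drop (K - k) with hsfx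
  have htake : ∀ t, 1 ≤ t → t ≤ m → (g t).reverse.take k = (sfx t).reverse := by
    intro t h1 h2
    rw [List.take_reverse, hglen t h1 h2]
  -- adjacency characterization
  have hadj : ∀ b, 1 ≤ b → b < m →
      (k ≤ lcsLen (g b) (g (b + 1)) ↔ sfx b = sfx (b + 1)) := by
    intro b h1 h2
    have hb1 : (g b).length = K := hglen b h1 (by omega)
    have hb2 : (g (b + 1)).length = K := hglen (b + 1) (by omega) (by omega)
    rw [my_lcsLen_ge_iff (by omega) (by omega), hb1, hb2]
  -- betweenness
  have hbetween : ∀ p q r, 1 ≤ p → p ≤ q → q ≤ r → r ≤ m →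
      sfx p = sfx r → sfx q = sfx p := by
    intro p q r h1 h2 h3 h4 hpr
    have hxy := hrel p q h1 h2 (by omega)
    have hyz := hrel q r (by omega) h3 h4
    have hxz : (g p).reverse.take k = (g r).reverse.take k := by
      rw [htake p h1 (by omega), htake r (by omega) h4, hpr]
    have := my_between k (g p).reverse (g q).reverse (g r).reverse hxy hyz hxz
    rw [htake q (by omega) (by omega), htake p h1 (by omega)] at this
    exact List.reverse_injective this
  -- chains
  have hchain : ∀ a, 1 ≤ a → ∀ b, a ≤ b → b ≤ m →
      (∀ c, a ≤ c → c < b → k ≤ lcsLen (g c) (g (c + 1))) → sfx a = sfx b := by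
    intro a ha b hab
    induction b, hab using Nat.le_induction with
    | base => intro _ _; rfl
    | succ n hn ih =>
      intro hnm hc
      have h1 : sfx a = sfx n := ih (by omega) (fun c hc1 hc2 => hc c hc1 (by omega))
      have h2 : sfx n = sfx (n + 1) :=
        (hadj n (by omega) (by omega)).mp (hc n hn (by omega))
      exact h1.trans h2
  have him : i ≤ m := le_trans hij hjm
  -- getD-index conversions: R.getD c [] = g (c+1)
  have hgD : ∀ c : ℕ, R.getD c [] = g (c + 1) := by
    intro c; simp [hg]
  -- endpoints
  have endL : sfx i' = sfx i := by
    apply hchain i' hi'1 i hi'le him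
    intro c hc1 hc2
    have := hi'max c hc1 hc2
    rwa [hgD c] at this
  have endR : sfx j = sfx j' := by
    apply hchain j (by omega) j' hj'ge hj'le
    intro c hc1 hc2
    have := hj'min c hc1 hc2
    rwa [hgD c] at this
  have hijs : sfx i = sfx j := by
    have hli : (g i).length = K := hglen i h1i him
    have hlj : (g j).length = K := hglen j (by omega) hjm
    have := (my_lcsLen_ge_iff (a := g i) (b := g j) (by omega) (by omega)).mp hcommon
    rw [hli, hlj] at this
    exact this
  have endL' : sfx i' = sfx j' := endL.trans (hijs.trans endR)
  intro t h1t htm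
  constructor
  · rintro ⟨h1, h2⟩
    have : sfx t = sfx i' := hbetween i' t j' hi'1 h1 h2 hj'le endL'
    show sfx t = sfx i
    rw [this, endL]
  · intro hst
    change sfx t = sfx i at hst
    constructor
    · by_contra hlt
      push_neg at hlt
      -- t < i', so i' ≥ 2
      have hi'2 : 2 ≤ i' := by omega
      rcases hi'prop with h | h
      · omega
      · have hlcs : lcsLen (g (i' - 1)) (g i') < k := by
          have e1 : R.getD (i' - 2) [] = g (i' - 1) := by
            have : i' - 1 - 1 = i' - 2 := by omega
            simp only [hg, this]
          have e2 : R.getD (i' - 1) [] = g i' := rfl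
          rwa [e1, e2] at h
        have hmid : sfx (i' - 1) = sfx t := by
          apply hbetween t (i' - 1) i' h1t (by omega) (by omega) (by omega)
          rw [hst, ← endL]
        have heq : sfx (i' - 1) = sfx (i' - 1 + 1) := by
          have : i' - 1 + 1 = i' := by omega
          rw [this, hmid, hst, ← endL]
        have := (hadj (i' - 1) (by omega) (by omega)).mpr heq
        have e3 : i' - 1 + 1 = i' := by omega
        rw [e3] at this
        omega
    · by_contra hlt
      push_neg at hlt
      -- j' < t ≤ m
      have hj'm : j' < m := by omega
      rcases hj'prop with h | h
      · omega
      · have hlcs : lcsLen (g j') (g (j' + 1)) < k := by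
          have e1 : R.getD (j' - 1) [] = g j' := rfl
          have e2 : R.getD j' [] = g (j' + 1) := hgD j'
          rwa [e1, e2] at h
        have hmid : sfx (j' + 1) = sfx j' := by
          apply hbetween j' (j' + 1) t (by omega) (by omega) (by omega) htm
          exact endR.symm.trans (hijs.symm.trans hst.symm)
        have heq : sfx j' = sfx (j' + 1) := hmid.symm
        have := (hadj j' (by omega) hj'm).mpr heq
        omega
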